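/- Let r ≥ s ≥ 0 with r ≡ s (mod 2). The number of lattice paths from (0,0) to (r,s) with steps (1,1) and (1,−1) that never go below the horizontal axis equals ((s+1)/(r+1))·(r+1 choose (r−s)/2) = (2(s+1)/(r+s+2))·r!/(((r−s)/2)!·((r+s)/2)!). If r and s have opposite parities the count is 0. -/
import Mathlib
open Finset


def DyckAux.cond (r : ℕ) (s : ℤ) (w : Fin r → ℤ) : Prop :=
  (∀ i, w i = 1 ∨ w i = -1) ∧
  (∀ j : ℕ, j ≤ r → 0 ≤ ∑ i : Fin r, if (i : ℕ) < j then w i else 0) ∧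
  (∑ i : Fin r, w i = s)

def Dt (r : ℕ) (s : ℤ) : Type := {w : Fin r → ℤ // DyckAux.cond r s w}

instance (r : ℕ) (s : ℤ) : Finite (Dt r s) := by
  have : Finite {w : Fin r → ℤ // ∀ i, w i = 1 ∨ w i = -1} := by
    apply Finite.of_injective (fun w => (fun i => decide (w.1 i = 1) : Fin r → Bool))
    intro a b h
    ext i
    have := congrFun h i
    rcases a.2 i with h1 | h1 <;> rcases b.2 i with h2 | h2 <;> simp_all
  exact Finite.of_injective
    (fun w : Dt r s => (⟨w.1, w.2.1⟩ : {w : Fin r → ℤ // ∀ i, w i = 1 ∨ w i = -1}))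
    (by intro a b h; exact Subtype.ext (congrArg Subtype.val h :))

lemma Dt_card_neg (r : ℕ) (s : ℤ) (hs : s < 0) : Nat.card (Dt r s) = 0 := by
  have : IsEmpty (Dt r s) := by
    constructor
    rintro ⟨w, h1, h2, h3⟩
    have := h2 r le_rfl
    rw [show (∑ i : Fin r, if (i : ℕ) < r then w i else 0) = ∑ i : Fin r, w i from
      Finset.sum_congr rfl (fun i _ => by simp [i.isLt])] at this
    omega
  exact Nat.card_of_isEmpty


lemma Dt_card_zero : Nat.card (Dt 0 0) = 1 := by
  have h1 : (Dt 0 0) := ⟨fun i => i.elim0, by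
    refine ⟨fun i => i.elim0, fun j _ => by simp, by simp⟩⟩
  have : Subsingleton (Dt 0 0) := ⟨by
    rintro ⟨a, _⟩ ⟨b, _⟩
    exact Subtype.ext (funext fun i => i.elim0)⟩
  haveI := Nonempty.intro h1
  exact Nat.card_unique

lemma Dt_card_zero' (s : ℤ) (hs : s ≠ 0) : Nat.card (Dt 0 s) = 0 := by
  have : IsEmpty (Dt 0 s) := ⟨by rintro ⟨w, h1, h2, h3⟩; simp at h3; exact hs h3.symm⟩
  exact Nat.card_of_isEmpty

lemma sum_ite_castSucc (r : ℕ) (w : Fin (r+1) → ℤ) (j : ℕ) (hj : j ≤ r) :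
    (∑ i : Fin (r+1), if (i : ℕ) < j then w i else 0) =
      ∑ i : Fin r, if (i : ℕ) < j then w i.castSucc else 0 := by
  rw [Fin.sum_univ_castSucc]
  simp only [Fin.coe_castSucc, Fin.val_last]
  rw [if_neg (by omega)]
  ring

lemma sum_snoc (r : ℕ) (v : Fin r → ℤ) (a : ℤ) :
    (∑ i : Fin (r+1), Fin.snoc v a i) = (∑ i : Fin r, v i) + a := by
  rw [Fin.sum_univ_castSucc]
  simp

lemma Dt_card_succ (r : ℕ) (s : ℤ) (hs : 0 ≤ s) :
    Nat.card (Dt (r+1) s) = Nat.card (Dt r (s-1)) + Nat.card (Dt r (s+1)) := by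
  classical
  rw [← Nat.card_sum]
  apply Nat.card_congr
  refine Equiv.ofBijective (fun w =>
    if h : w.1 (Fin.last r) = 1 then
      Sum.inl ⟨fun i => w.1 i.castSucc, ?_, ?_, ?_⟩
    else
      Sum.inr ⟨fun i => w.1 i.castSucc, ?_, ?_, ?_⟩) ⟨?_, ?_⟩
  · exact fun i => w.2.1 i.castSucc
  · intro j hj
    have := w.2.2.1 j (by omega)
    rwa [sum_ite_castSucc r w.1 j hj] at this
  · have htot := w.2.2.2
    rw [Fin.sum_univ_castSucc, h] at htot
    show (∑ i : Fin r, w.1 i.castSucc) = s - 1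
    omega
  · exact fun i => w.2.1 i.castSucc
  · intro j hj
    have := w.2.2.1 j (by omega)
    rwa [sum_ite_castSucc r w.1 j hj] at this
  · have htot := w.2.2.2
    have h' : w.1 (Fin.last r) = -1 := (w.2.1 (Fin.last r)).resolve_left h
    rw [Fin.sum_univ_castSucc, h'] at htot
    show (∑ i : Fin r, w.1 i.castSucc) = s + 1
    omega
  · -- injective
    intro a b hab
    by_cases ha : a.1 (Fin.last r) = 1 <;> by_cases hb : b.1 (Fin.last r) = 1 <;>
      simp only [ha, hb, dif_pos, dif_neg, not_false_iff] at hab <;>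
      first
        | (apply Subtype.ext
           have h2 := congrArg Subtype.val (Sum.inl.inj hab)
           funext i
           refine Fin.lastCases ?_ ?_ i
           · rw [ha, hb]
           · exact fun j => congrFun h2 j)
        | (apply Subtype.ext
           have h2 := congrArg Subtype.val (Sum.inr.inj hab)
           have ha' : a.1 (Fin.last r) = -1 := (a.2.1 (Fin.last r)).resolve_left ha
           have hb' : b.1 (Fin.last r) = -1 := (b.2.1 (Fin.last r)).resolve_left hb
           funext i
           refine Fin.lastCases ?_ ?_ i
           · rw [ha', hb']
           · exact fun j => congrFun h2 j)
        | simp at hab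
  · -- surjective
    rintro (⟨v, hv1, hv2, hv3⟩ | ⟨v, hv1, hv2, hv3⟩)
    · refine ⟨⟨Fin.snoc v 1, fun i => ?_, fun j hj => ?_, ?_⟩, ?_⟩
      · refine Fin.lastCases ?_ ?_ i
        · simp
        · intro j; rw [Fin.snoc_castSucc]; exact hv1 j
      · rcases Nat.lt_or_ge j (r+1) with h | h
        · rw [sum_ite_castSucc r _ j (by omega)]
          simpa only [Fin.snoc_castSucc] using hv2 j (by omega)
        · have hj' : j = r + 1 := by omega
          have : (∑ i : Fin (r+1), if (i : ℕ) < j then Fin.snoc v 1 i else 0)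
              = ∑ i : Fin (r+1), Fin.snoc v 1 i :=
            Finset.sum_congr rfl (fun i _ => by rw [if_pos (by omega)])
          rw [this, sum_snoc, hv3]
          omega
      · rw [sum_snoc, hv3]; ring
      · beta_reduce
        rw [dif_pos (by simp)]
        congr 1
        apply Subtype.ext
        funext i
        simp [Fin.snoc_castSucc]
    · refine ⟨⟨Fin.snoc v (-1), fun i => ?_, fun j hj => ?_, ?_⟩, ?_⟩
      · refine Fin.lastCases ?_ ?_ i
        · simp
        · intro j; rw [Fin.snoc_castSucc]; exact hv1 j
      · rcases Nat.lt_or_ge j (r+1) with h | h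
        · rw [sum_ite_castSucc r _ j (by omega)]
          simpa only [Fin.snoc_castSucc] using hv2 j (by omega)
        · have hj' : j = r + 1 := by omega
          have : (∑ i : Fin (r+1), if (i : ℕ) < j then Fin.snoc v (-1) i else 0)
              = ∑ i : Fin (r+1), Fin.snoc v (-1) i :=
            Finset.sum_congr rfl (fun i _ => by rw [if_pos (by omega)])
          rw [this, sum_snoc, hv3]
          omega
      · rw [sum_snoc, hv3]; ring
      · beta_reduce
        rw [dif_neg (by simp)]
        congr 1
        apply Subtype.ext
        funext i
        simp [Fin.snoc_castSucc]

def Fb : ℕ → ℤ → ℤ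
  | 0, s => if s = 0 then 1 else 0
  | (r+1), s => if s < 0 then 0 else Fb r (s-1) + Fb r (s+1)

lemma Fb_neg (r : ℕ) (s : ℤ) (hs : s < 0) : Fb r s = 0 := by
  cases r with
  | zero => simp [Fb]; omega
  | succ r => simp [Fb, hs]

lemma Fb_parity (r : ℕ) (s : ℤ) (h : ¬ (2 ∣ (r : ℤ) - s)) : Fb r s = 0 := by
  induction r generalizing s with
  | zero => simp only [Fb]; rw [if_neg]; intro h'; subst h'; simp at h
  | succ r ih =>
    simp only [Fb]
    rcases lt_or_ge s 0 with h' | h'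
    · rw [if_pos h']
    · rw [if_neg (by omega), ih (s-1) (by push_cast at h ⊢; omega),
        ih (s+1) (by push_cast at h ⊢; omega)]
      ring

lemma Fb_gt (r : ℕ) (s : ℤ) (h : (r : ℤ) < s) : Fb r s = 0 := by
  induction r generalizing s with
  | zero => simp only [Fb]; rw [if_neg]; omega
  | succ r ih =>
    simp only [Fb]
    rw [if_neg (by omega), ih (s-1) (by push_cast at h ⊢; omega),
      ih (s+1) (by push_cast at h ⊢; omega)]
    ring

lemma Fb_closed (r : ℕ) (s k : ℕ) (hrs : r = s + 2 * k) :
    (Fb r (s : ℤ) : ℚ) = ((s : ℚ) + 1) / ((r : ℚ) + 1) * ((r + 1).choose k : ℚ) := by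
  induction r generalizing s k with
  | zero =>
    have hs : s = 0 := by omega
    have hk : k = 0 := by omega
    subst hs; subst hk
    norm_num [Fb]
  | succ r ih =>
    have hfact : ∀ n : ℕ, ((n+1).factorial : ℚ) = ((n:ℚ)+1) * (n.factorial : ℚ) := by
      intro n; rw [Nat.factorial_succ]; push_cast; ring
    have hfpos : ∀ n : ℕ, (0:ℚ) < (n.factorial : ℚ) := fun n => by
      exact_mod_cast n.factorial_pos
    rcases Nat.eq_zero_or_pos k with hk | hk
    · -- s = r+1, k = 0
      subst hk
      have hs : s = r + 1 := by omega
      subst hs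
      simp only [Fb]
      rw [if_neg (by push_cast; omega)]
      push_cast
      rw [show ((r:ℤ)+1) - 1 = (r : ℤ) by ring]
      rw [show ((r:ℤ)+1) + 1 = ((r+2 : ℕ) : ℤ) by push_cast; ring]
      rw [Fb_gt r (r+2 : ℕ) (by push_cast; omega)]
      have := ih r 0 (by omega)
      push_cast at this ⊢
      rw [this]
      have h1 : ((r:ℚ)+1) ≠ 0 := by positivity
      have h2 : ((r:ℚ)+2) ≠ 0 := by positivity
      simp [Nat.choose_zero_right]
      field_simp
    · -- k ≥ 1
      obtain ⟨m, rfl⟩ : ∃ m, k = m + 1 := ⟨k - 1, by omega⟩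
      simp only [Fb]
      rw [if_neg (by push_cast; omega)]
      rcases Nat.eq_zero_or_pos s with hs | hs
      · subst hs
        -- r = 2m+1
        have hr : r = 2 * m + 1 := by omega
        subst hr
        rw [show ((0:ℕ):ℤ) - 1 = (-1 : ℤ) by ring, Fb_neg _ _ (by omega)]
        rw [show ((0:ℕ):ℤ) + 1 = ((1:ℕ) : ℤ) by norm_num]
        have := ih 1 m (by omega)
        push_cast at this ⊢
        rw [this]
        -- identity: (0+1)/(2m+3) * C(2m+3, m+1) = (1+1)/(2m+2) * C(2m+2, m)
        rw [Nat.cast_choose ℚ (show m + 1 ≤ 2*m+1+1+1 by omega),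
            Nat.cast_choose ℚ (show m ≤ 2*m+1+1 by omega)]
        rw [show 2*m+1+1+1 - (m+1) = m + 2 by omega, show 2*m+1+1 - m = m + 2 by omega]
        have e1 := hfact (2*m+2)
        have e2 := hfact (m)
        have e3 := hfact (2*m+1)
        push_cast at e1 e2 e3
        rw [show 2*m+1+1+1 = (2*m+2)+1 by ring, show (2*m+1)+1 = (2*m+1)+1 by ring] at *
        rw [e1]
        have h1 : ((m:ℚ)+1) ≠ 0 := by positivity
        have hf1 := (hfpos (m+1)).ne'
        have hf2 := (hfpos (m+2)).ne'
        have hf3 := (hfpos (2*m+2)).ne'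
        have e4 := hfact m
        push_cast at e4
        rw [e4] at hf1 ⊢
        field_simp
        ring
      · -- s ≥ 1
        obtain ⟨t, rfl⟩ : ∃ t, s = t + 1 := ⟨s - 1, by omega⟩
        have hr : r = t + 2 * m + 2 := by omega
        subst hr
        rw [show ((t+1:ℕ):ℤ) - 1 = ((t:ℕ) : ℤ) by push_cast; ring]
        rw [show ((t+1:ℕ):ℤ) + 1 = ((t+2:ℕ) : ℤ) by push_cast; ring]
        have h1 := ih t (m+1) (by omega)
        have h2 := ih (t+2) m (by omega)
        push_cast at h1 h2 ⊢
        rw [h1, h2]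
        -- identity in ℚ
        rw [Nat.cast_choose ℚ (show m + 1 ≤ t+2*m+2+1+1 by omega),
            Nat.cast_choose ℚ (show m + 1 ≤ t+2*m+2+1 by omega),
            Nat.cast_choose ℚ (show m ≤ t+2*m+2+1 by omega)]
        rw [show t+2*m+2+1+1 - (m+1) = t+m+3 by omega,
            show t+2*m+2+1 - (m+1) = t+m+2 by omega,
            show t+2*m+2+1 - m = t+m+3 by omega]
        have e1 := hfact (t+2*m+3)
        have e2 := hfact (t+m+2)
        have e3 := hfact m
        push_cast at e1 e2 e3
        rw [show t+2*m+2+1+1 = (t+2*m+3)+1 by ring, e1,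
            show t+m+3 = (t+m+2)+1 by ring, e2,
            show t+2*m+2+1 = t+2*m+3 by ring,
            show (m:ℕ)+1 = m+1 by ring]
        have e4 := hfact m
        push_cast at e4
        rw [e4]
        have hf1 := (hfpos (m+1)).ne'
        have hf2 := (hfpos m).ne'
        have hf3 := (hfpos (t+m+2)).ne'
        have hf4 := (hfpos (t+2*m+3)).ne'
        have hq1 : ((t:ℚ)+2*m+3+1) ≠ 0 := by positivity
        have hq2 : ((t:ℚ)+2*m+3) ≠ 0 := by positivity
        have hq3 : ((t:ℚ)+m+2+1) ≠ 0 := by positivity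
        have hq4 : ((m:ℚ)+1) ≠ 0 := by positivity
        field_simp
        ring

lemma Dt_card_eq_Fb (r : ℕ) (s : ℤ) : (Nat.card (Dt r s) : ℤ) = Fb r s := by
  induction r generalizing s with
  | zero =>
    by_cases hs : s = 0
    · subst hs; rw [Dt_card_zero]; simp [Fb]
    · rw [Dt_card_zero' s hs]; simp [Fb, hs]
  | succ r ih =>
    rcases lt_or_ge s 0 with h | h
    · rw [Dt_card_neg _ _ h]; simp [Fb, h]
    · rw [Dt_card_succ r s h]
      simp only [Fb, if_neg (not_lt.mpr h)]
      push_cast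
      rw [ih (s-1), ih (s+1)]

theorem dyck_path_count (r s : ℕ) (hsr : s ≤ r) :
    let T := {w : Fin r → ℤ //
      (∀ i, w i = 1 ∨ w i = -1) ∧
      (∀ j : ℕ, j ≤ r → 0 ≤ ∑ i : Fin r, if (i : ℕ) < j then w i else 0) ∧
      (∑ i : Fin r, w i = (s : ℤ))}
    (r % 2 = s % 2 →
      (Nat.card T : ℚ) =
          ((s : ℚ) + 1) / ((r : ℚ) + 1) * ((r + 1).choose ((r - s) / 2) : ℚ) ∧
      (Nat.card T : ℚ) =
          2 * ((s : ℚ) + 1) / ((r : ℚ) + (s : ℚ) + 2) *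
            ((r.factorial : ℚ) /
              ((((r - s) / 2).factorial : ℚ) * (((r + s) / 2).factorial : ℚ)))) ∧
    (r % 2 ≠ s % 2 → Nat.card T = 0) := by
  intro T
  have hTD : T = Dt r (s : ℤ) := rfl
  constructor
  · intro hpar
    set k := (r - s) / 2 with hk
    have hrk : r = s + 2 * k := by omega
    have hcard : (Nat.card T : ℚ) = ((s : ℚ) + 1) / ((r : ℚ) + 1) * ((r + 1).choose k : ℚ) := by
      rw [hTD]
      have h1 : ((Nat.card (Dt r (s:ℤ)) : ℤ) : ℚ) = ((Fb r (s:ℤ) : ℤ) : ℚ) := by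
        exact_mod_cast congrArg (fun z : ℤ => (z : ℚ)) (Dt_card_eq_Fb r (s:ℤ))
      push_cast at h1
      rw [h1]
      exact Fb_closed r s k hrk
    refine ⟨hcard, ?_⟩
    rw [hcard]
    have hm : (r + s) / 2 = s + k := by omega
    rw [hm]
    rw [Nat.cast_choose ℚ (show k ≤ r + 1 by omega),
        show r + 1 - k = (s + k) + 1 by omega]
    have e1 : ((r+1).factorial : ℚ) = ((r:ℚ)+1) * (r.factorial : ℚ) := by
      rw [Nat.factorial_succ]; push_cast; ring
    have e2 : (((s+k)+1).factorial : ℚ) = ((s:ℚ)+(k:ℚ)+1) * ((s+k).factorial : ℚ) := by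
      rw [Nat.factorial_succ]; push_cast; ring
    rw [show r + 1 = r + 1 from rfl, e1, e2]
    have hf1 : ((k.factorial : ℚ)) ≠ 0 := by positivity
    have hf2 : (((s+k).factorial : ℚ)) ≠ 0 := by positivity
    have hf3 : ((r.factorial : ℚ)) ≠ 0 := by positivity
    have hq1 : ((r:ℚ)+1) ≠ 0 := by positivity
    have hq2 : ((s:ℚ)+(k:ℚ)+1) ≠ 0 := by positivity
    have hq3 : ((r:ℚ)+(s:ℚ)+2) ≠ 0 := by positivity
    have hrr : (r : ℚ) = (s : ℚ) + 2 * (k : ℚ) := by exact_mod_cast congrArg (fun n : ℕ => (n:ℚ)) hrk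
    field_simp
    rw [hrr]
    ring
  · intro hpar
    rw [hTD]
    have : IsEmpty (Dt r (s:ℤ)) := by
      constructor
      rintro ⟨w, h1, h2, h3⟩
      have hmod : (∑ i : Fin r, w i) % 2 = (r : ℤ) % 2 := by
        rw [Finset.sum_int_mod]
        have : (∑ i : Fin r, w i % 2) = (r : ℤ) := by
          rw [Finset.sum_congr rfl (fun i _ => show w i % 2 = 1 by rcases h1 i with h | h <;> simp [h])]
          simp
        rw [this]
      rw [h3] at hmod
      omega
    exact Nat.card_of_isEmpty
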